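/- Let f = Σ_{j=0}^d c_j t^j be a univariate polynomial of degree d with real coefficients, and substitute t = t_1 + i t_2 to write f = f_re(t_1,t_2) + i f_im(t_1,t_2) with f_re, f_im ∈ ℝ[t_1,t_2]. Then the resultant Res_{t_1}(f_re, f_im), taken with respect to t_1, is divisible by t_2^d in ℝ[t_2]. -/

import Mathlib

/-- The Sylvester matrix of two polynomials `p`, `q`, regarded as having degrees `m` and `n`
respectively. Its determinant is the resultant of `p` and `q`. -/
def sylvester {R : Type*} [CommRing R] (p q : Polynomial R) (m n : ℕ) :
    Matrix (Fin (m + n)) (Fin (m + n)) R :=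
  Matrix.of fun i j =>
    if (j : ℕ) < n then
      (if (j : ℕ) ≤ (i : ℕ) ∧ (i : ℕ) ≤ m + (j : ℕ) then p.coeff (m + (j : ℕ) - (i : ℕ)) else 0)
    else
      (if (j : ℕ) - n ≤ (i : ℕ) ∧ (i : ℕ) ≤ n + ((j : ℕ) - n) then
        q.coeff (n + ((j : ℕ) - n) - (i : ℕ)) else 0)

/-- Let `f` be a real univariate polynomial of degree `d`, and write
`f(t₁ + i t₂) = f_re(t₁,t₂) + i f_im(t₁,t₂)` with `f_re, f_im` real polynomials in `t₁`
over `ℝ[t₂]`. Then the resultant of `f_re` and `f_im` with respect to `t₁` (the determinant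
of the `(2d-1) × (2d-1)` Sylvester matrix, `f_re` having degree `d` and `f_im` degree `d-1`
in `t₁`) is divisible by `t₂^d` in `ℝ[t₂]`. -/
theorem t2_pow_degree_dvd_resultant (d : ℕ) (hd : 0 < d)
    (f : Polynomial ℝ) (hdeg : f.natDegree = d)
    (fre fim : Polynomial (Polynomial ℝ))
    (hdecomp : ∀ s₁ s₂ : ℝ,
      (f.map (algebraMap ℝ ℂ)).eval ((s₁ : ℂ) + (s₂ : ℂ) * Complex.I)
        = (((fre.map (Polynomial.evalRingHom s₂)).eval s₁ : ℝ) : ℂ)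
          + (((fim.map (Polynomial.evalRingHom s₂)).eval s₁ : ℝ) : ℂ) * Complex.I) :
    (Polynomial.X : Polynomial ℝ) ^ d ∣ (sylvester fre fim d (d - 1)).det := by
  -- Step 1: fim vanishes at t₂ = 0
  have him0 : fim.map (Polynomial.evalRingHom (0:ℝ)) = 0 := by
    apply Polynomial.funext
    intro s₁
    have h := hdecomp s₁ 0
    simp only [Complex.ofReal_zero, zero_mul, add_zero] at h
    have hL : ((f.map (algebraMap ℝ ℂ)).eval ((s₁:ℝ):ℂ)).im = 0 := by
      rw [Polynomial.eval_map]
      have : ((s₁:ℝ):ℂ) = algebraMap ℝ ℂ s₁ := rfl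
      rw [this, Polynomial.eval₂_at_apply]
      simp
    rw [h] at hL
    simpa using hL
  -- Step 2: every coefficient of fim is divisible by X
  have hdvd : ∀ k, (Polynomial.X : Polynomial ℝ) ∣ fim.coeff k := by
    intro k
    rw [Polynomial.X_dvd_iff, Polynomial.coeff_zero_eq_eval_zero]
    have := congrArg (fun p => Polynomial.coeff p k) him0
    simpa [Polynomial.coeff_map] using this
  set n := d - 1 with hn
  set M := sylvester fre fim d n with hM
  have hcol : ∀ (i j : Fin (d + n)), ¬ (j:ℕ) < n → (Polynomial.X : Polynomial ℝ) ∣ M i j := by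
    intro i j hj
    simp only [hM, sylvester, Matrix.of_apply, if_neg hj]
    split
    · exact hdvd _
    · exact dvd_zero _
  set N : Matrix (Fin (d+n)) (Fin (d+n)) (Polynomial ℝ) :=
    Matrix.of fun i j => if (j:ℕ) < n then M i j else M i j /ₘ Polynomial.X with hN
  have hfac : M = N * Matrix.diagonal (fun j : Fin (d+n) =>
      if (j:ℕ) < n then (1 : Polynomial ℝ) else Polynomial.X) := by
    ext i j
    rw [Matrix.mul_diagonal]
    by_cases hj : (j:ℕ) < n
    · simp [hN, hj]
    · simp only [hN, Matrix.of_apply, if_neg hj]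
      have hd0 := hcol i j hj
      have hm : M i j %ₘ Polynomial.X = 0 := by
        rw [Polynomial.modByMonic_X, ← Polynomial.coeff_zero_eq_eval_zero,
          Polynomial.X_dvd_iff.mp hd0, map_zero]
      conv_lhs => rw [← Polynomial.modByMonic_add_div (M i j) Polynomial.X]
      rw [hm, zero_add, mul_comm]
  rw [hfac, Matrix.det_mul, Matrix.det_diagonal]
  apply Dvd.dvd.mul_left
  have hprod : (∏ j : Fin (d+n), (if (j:ℕ) < n then (1 : Polynomial ℝ) else Polynomial.X))
      = Polynomial.X ^ ((Finset.univ.filter fun j : Fin (d+n) => ¬ (j:ℕ) < n).card) := by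
    rw [Finset.prod_ite]
    simp
  rw [hprod]
  have h1 : (Finset.univ.filter fun j : Fin (d+n) => (j:ℕ) < n).card = n := by
    have himg : (Finset.univ.filter fun j : Fin (d+n) => (j:ℕ) < n).image Fin.val
        = Finset.range n := by
      ext x
      simp only [Finset.mem_image, Finset.mem_filter, Finset.mem_univ, true_and,
        Finset.mem_range]
      constructor
      · rintro ⟨j, hj, rfl⟩; exact hj
      · intro hx; exact ⟨⟨x, by omega⟩, hx, rfl⟩
    calc (Finset.univ.filter fun j : Fin (d+n) => (j:ℕ) < n).card
        = ((Finset.univ.filter fun j : Fin (d+n) => (j:ℕ) < n).image Fin.val).card :=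
          (Finset.card_image_of_injective _ Fin.val_injective).symm
      _ = n := by rw [himg, Finset.card_range]
  have h2 := Finset.card_filter_add_card_filter_not
    (s := (Finset.univ : Finset (Fin (d+n)))) (p := fun j : Fin (d+n) => (j:ℕ) < n)
  simp only [Finset.card_univ, Fintype.card_fin] at h2
  have : (Finset.univ.filter fun j : Fin (d+n) => ¬ (j:ℕ) < n).card = d := by omega
  rw [this]
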